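/- Let Q be the discrete Heisenberg group, with presentation Q = ⟨a, b | [a,[a,b]] = 1, [b,[a,b]] = 1⟩, equipped with the word metric associated to the generating set {a, b}, and let q = [a,b] = aba⁻¹b⁻¹. Then the element q is distorted in Q, with distortion function √n: there exists C ≥ 1 such that (1/C)·√n ≤ |qⁿ| ≤ C·√n for every n ≥ 1. -/

import Mathlib

open Set Pointwise
open scoped commutatorElement

variable {G : Type*} [Group G]

/-- The word length of `g` with respect to a generating set `S`:
the least `n` such that `g` is a product of `n` elements of `S ∪ S⁻¹`. -/
noncomputable def wordLength (S : Set G) (g : G) : ℕ :=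
  sInf {n : ℕ | ∃ l : List G, l.length = n ∧ (∀ x ∈ l, x ∈ S ∪ S⁻¹) ∧ l.prod = g}

/-- The word metric associated to a generating set `S`, as a real number. -/
noncomputable def wordDist (S : Set G) (g h : G) : ℝ :=
  (wordLength S (g⁻¹ * h) : ℝ)

/-- The conjugacy norm of (the conjugacy class of) `g`: the minimal word length
of an element conjugate to `g`. -/
noncomputable def conjNorm (S : Set G) (g : G) : ℕ :=
  sInf {n : ℕ | ∃ x : G, n = wordLength S (x * g * x⁻¹)}

/-- The Lipschitz pseudo-metric, computed on automorphisms (it only depends on the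
outer classes): `d_Lip(φ₁, φ₂) = ln sup_c ‖φ₂⁻¹(c)‖ / ‖φ₁⁻¹(c)‖`, the supremum being
over all non-trivial conjugacy classes `c`. -/
noncomputable def dLipAut (S : Set G) (φ₁ φ₂ : MulAut G) : ℝ :=
  Real.log (sSup {r : ℝ | ∃ g : G, g ≠ 1 ∧
    r = (conjNorm S (φ₂⁻¹ g) : ℝ) / (conjNorm S (φ₁⁻¹ g) : ℝ)})

instance : ((MulAut.conj : G →* MulAut G).range).Normal := by
  constructor
  rintro x ⟨g, rfl⟩ ψ
  refine ⟨ψ g, ?_⟩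
  ext y
  simp [MulAut.conj, mul_assoc]

/-- The outer automorphism group `Out(G) = Aut(G)/Inn(G)`. -/
abbrev OutGroup (G : Type*) [Group G] :=
  MulAut G ⧸ (MulAut.conj : G →* MulAut G).range

/-- The Lipschitz pseudo-metric on `Out(G)`; it is computed using any
representatives of the outer classes (the value does not depend on this choice,
whence the infimum). -/
noncomputable def dLipOut (S : Set G) (Φ₁ Φ₂ : OutGroup G) : ℝ :=
  sInf {d : ℝ | ∃ φ₁ φ₂ : MulAut G, (φ₁ : OutGroup G) = Φ₁ ∧ (φ₂ : OutGroup G) = Φ₂ ∧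
    d = dLipAut S φ₁ φ₂}

/-- Gromov hyperbolicity (four-point condition) for the word metric of `(G, S)`. -/
def IsHyperbolic (S : Set G) : Prop :=
  ∃ δ : ℝ, 0 ≤ δ ∧ ∀ x y z w : G,
    wordDist S x z + wordDist S y w ≤
      max (wordDist S x y + wordDist S z w) (wordDist S x w + wordDist S y z) + 2 * δ

/-- A group is virtually cyclic if it has a cyclic subgroup of finite index;
a group is *non-elementary* if it is not virtually cyclic. -/
def IsVirtuallyCyclic (G : Type*) [Group G] : Prop :=
  ∃ H : Subgroup G, H.FiniteIndex ∧ IsCyclic H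

/-- A length function on a group `H`. -/
structure IsLengthFunction {H : Type*} [Group H] (L : H → ℕ) : Prop where
  eq_zero_iff : ∀ h : H, L h = 0 ↔ h = 1
  inv_eq : ∀ h : H, L h⁻¹ = L h
  subadd : ∀ h₁ h₂ : H, L (h₁ * h₂) ≤ L h₁ + L h₂
  growth : ∃ lam : ℝ, 0 < lam ∧ ∀ r : ℕ, ∃ t : Finset H,
    {h : H | L h ≤ r} ⊆ ↑t ∧ (t.card : ℝ) ≤ lam ^ r

/-- A length function on the (additive) group `ℤ`. -/
structure IsLengthFunctionZ (L : ℤ → ℕ) : Prop where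
  eq_zero_iff : ∀ n : ℤ, L n = 0 ↔ n = 0
  neg_eq : ∀ n : ℤ, L (-n) = L n
  subadd : ∀ m n : ℤ, L (m + n) ≤ L m + L n
  growth : ∃ lam : ℝ, 0 < lam ∧ ∀ r : ℕ, ∃ t : Finset ℤ,
    {n : ℤ | L n ≤ r} ⊆ ↑t ∧ (t.card : ℝ) ≤ lam ^ r

/-- `f₁ ≺ f₂` for functions on `ℤ`. -/
def PrecZ (f₁ f₂ : ℤ → ℝ) : Prop := ∃ C : ℝ, 0 < C ∧ ∀ n : ℤ, f₁ n ≤ C * f₂ n + C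

/-- `f₁ ≍ f₂` (equivalence of growth) for functions on `ℤ`. -/
def EquivZ (f₁ f₂ : ℤ → ℝ) : Prop := PrecZ f₁ f₂ ∧ PrecZ f₂ f₁

/-- `f₁ ≺ f₂` for functions on `ℕ`. -/
def PrecN (f₁ f₂ : ℕ → ℝ) : Prop := ∃ C : ℝ, 0 < C ∧ ∀ n : ℕ, f₁ n ≤ C * f₂ n + C

/-- `f₁ ≍ f₂` (equivalence of growth) for functions on `ℕ`. -/
def EquivN (f₁ f₂ : ℕ → ℝ) : Prop := PrecN f₁ f₂ ∧ PrecN f₂ f₁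

/-- A group is finitely presented if it is isomorphic to the quotient of a
finitely generated free group by the normal closure of finitely many relators. -/
def FinitelyPresented (Q : Type*) [Group Q] : Prop :=
  ∃ (n : ℕ) (rels : Finset (FreeGroup (Fin n))),
    Nonempty (PresentedGroup (↑rels : Set (FreeGroup (Fin n))) ≃* Q)

/-- A geodesic from `x` to `y` in a metric space, recorded as its image `s`. -/
def IsGeodesicFrom {X : Type*} [MetricSpace X] (s : Set X) (x y : X) : Prop :=
  ∃ γ : ℝ → X, γ 0 = x ∧ γ (dist x y) = y ∧
    (∀ u ∈ Set.Icc (0:ℝ) (dist x y), ∀ v ∈ Set.Icc (0:ℝ) (dist x y),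
      dist (γ u) (γ v) = |u - v|) ∧
    s = γ '' Set.Icc (0:ℝ) (dist x y)

/-- A geodesic metric space: any two points are joined by a geodesic. -/
def GeodesicSpace (X : Type*) [MetricSpace X] : Prop :=
  ∀ x y : X, ∃ s : Set X, IsGeodesicFrom s x y

/-- All geodesic triangles are `δ`-thin: each side lies in the `δ`-neighborhood of
the union of the other two sides. -/
def ThinTriangles (X : Type*) [MetricSpace X] (δ : ℝ) : Prop :=
  ∀ x y z : X, ∀ s₁ s₂ s₃ : Set X,
    IsGeodesicFrom s₁ x y → IsGeodesicFrom s₂ y z → IsGeodesicFrom s₃ x z →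
    ∀ p ∈ s₃, ∃ q ∈ s₁ ∪ s₂, dist p q ≤ δ


@[ext] structure Heis where
  x : ℤ
  y : ℤ
  z : ℤ

namespace Heis

instance : Mul Heis := ⟨fun p q => ⟨p.x + q.x, p.y + q.y, p.z + q.z + p.x * q.y⟩⟩
instance : One Heis := ⟨⟨0, 0, 0⟩⟩
instance : Inv Heis := ⟨fun p => ⟨-p.x, -p.y, -p.z + p.x * p.y⟩⟩

@[simp] lemma mul_def (p q : Heis) :
    p * q = ⟨p.x + q.x, p.y + q.y, p.z + q.z + p.x * q.y⟩ := rfl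
@[simp] lemma one_def : (1 : Heis) = ⟨0, 0, 0⟩ := rfl
@[simp] lemma inv_def (p : Heis) : p⁻¹ = ⟨-p.x, -p.y, -p.z + p.x * p.y⟩ := rfl

instance : Group Heis where
  mul_assoc a b c := by ext <;> simp <;> ring
  one_mul a := by ext <;> simp
  mul_one a := by ext <;> simp
  inv_mul_cancel a := by ext <;> simp <;> ring

lemma comm_ab : ⁅(⟨1,0,0⟩ : Heis), (⟨0,1,0⟩ : Heis)⁆ = ⟨0,0,1⟩ := by
  show _ * _ * _ * _ = _
  ext <;> simp

lemma zpow (t : ℤ) (n : ℕ) : (⟨0,0,t⟩ : Heis) ^ n = ⟨0,0,n*t⟩ := by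
  induction n with
  | zero => simp
  | succ n ih => rw [pow_succ, ih]; ext <;> simp <;> ring

lemma prod_bound (l : List Heis)
    (h : ∀ p ∈ l, p = ⟨1,0,0⟩ ∨ p = ⟨-1,0,0⟩ ∨ p = ⟨0,1,0⟩ ∨ p = ⟨0,-1,0⟩) :
    |l.prod.y| ≤ (l.length : ℤ) ∧ |l.prod.z| ≤ (l.length : ℤ)^2 := by
  induction l with
  | nil => simp
  | cons g t ih =>
    obtain ⟨hy, hz⟩ := ih (fun p hp => h p (List.mem_cons_of_mem _ hp))
    have hg := h g (List.mem_cons_self)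
    rw [List.prod_cons, List.length_cons]
    push_cast
    set py := t.prod.y
    set pz := t.prod.z
    set N := (t.length : ℤ)
    have h1 : (0:ℤ) ≤ N := Int.natCast_nonneg _
    rcases hg with rfl | rfl | rfl | rfl <;> simp <;> constructor
    · linarith
    · calc |pz + py| ≤ |pz| + |py| := abs_add_le _ _
        _ ≤ N^2 + N := by linarith
        _ ≤ (N+1)^2 := by nlinarith
    · linarith
    · calc |pz + -py| ≤ |pz| + |(-py)| := abs_add_le _ _
        _ ≤ N^2 + N := by rw [abs_neg]; linarith
        _ ≤ (N+1)^2 := by nlinarith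
    · calc |1 + py| ≤ |(1:ℤ)| + |py| := abs_add_le _ _
        _ ≤ N + 1 := by simp; linarith
    · nlinarith
    · calc |-1 + py| ≤ |(-1:ℤ)| + |py| := abs_add_le _ _
        _ ≤ N + 1 := by simp; linarith
    · nlinarith

end Heis


section
variable {G : Type*} [Group G] {a b c : G}

lemma pow_mul_single (h : a * b = c * (b * a)) (hca : Commute c a) (m : ℕ) :
    a ^ m * b = c ^ m * (b * a ^ m) := by
  induction m with
  | zero => simp
  | succ m ih =>
    calc a ^ (m+1) * b = a * (a ^ m * b) := by rw [pow_succ']; group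
      _ = a * (c ^ m * (b * a ^ m)) := by rw [ih]
      _ = (a * c ^ m) * (b * a ^ m) := by group
      _ = c ^ m * ((a * b) * a ^ m) := by rw [(hca.symm.pow_right m).eq]; group
      _ = c ^ m * (c * (b * a) * a ^ m) := by rw [h]
      _ = c ^ (m+1) * (b * a ^ (m+1)) := by rw [pow_succ', pow_succ']; group

lemma pow_mul_pow (h : a * b = c * (b * a)) (hca : Commute c a) (hcb : Commute c b)
    (m n : ℕ) : a ^ m * b ^ n = c ^ (m * n) * (b ^ n * a ^ m) := by
  induction n with
  | zero => simp
  | succ n ih =>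
    calc a ^ m * b ^ (n+1) = (a ^ m * b ^ n) * b := by rw [pow_succ]; group
      _ = c ^ (m*n) * (b ^ n * (a ^ m * b)) := by rw [ih]; group
      _ = c ^ (m*n) * (b ^ n * (c ^ m * (b * a ^ m))) := by
          rw [pow_mul_single h hca]
      _ = c ^ (m*n) * (c ^ m * (b ^ n * (b * a ^ m))) := by
          rw [← mul_assoc (b^n), ((hcb.pow_left m).pow_right n).symm.eq]; group
      _ = c ^ (m*(n+1)) * (b ^ (n+1) * a ^ m) := by
          rw [mul_add, mul_one, pow_add, pow_succ']; group

lemma commutator_pow_eq (h : a * b = ⁅a, b⁆ * (b * a))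
    (hca : Commute ⁅a, b⁆ a) (hcb : Commute ⁅a, b⁆ b) (m : ℕ) :
    ⁅a ^ m, b ^ m⁆ = ⁅a, b⁆ ^ (m * m) := by
  have := pow_mul_pow h hca hcb m m
  rw [commutatorElement_def, this]
  group
end

/-- In the discrete Heisenberg group
`Q = ⟨a, b ∣ [a,[a,b]] = 1, [b,[a,b]] = 1⟩` with generating set `{a, b}`,
the commutator `q = [a,b]` is distorted with distortion `√n`:
`(1/C)·√n ≤ |qⁿ| ≤ C·√n` for some `C ≥ 1` and all `n ≥ 1`. -/
theorem heisenberg_commutator_distortion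
    (rels : Set (FreeGroup (Fin 2)))
    (hrels : rels = {⁅FreeGroup.of (0 : Fin 2),
                       ⁅FreeGroup.of (0 : Fin 2), FreeGroup.of (1 : Fin 2)⁆⁆,
                     ⁅FreeGroup.of (1 : Fin 2),
                       ⁅FreeGroup.of (0 : Fin 2), FreeGroup.of (1 : Fin 2)⁆⁆}) :
    ∃ C : ℝ, 1 ≤ C ∧ ∀ n : ℕ, 1 ≤ n →
      (1 / C) * Real.sqrt n ≤
          (wordLength
            ({PresentedGroup.of (rels := rels) (0 : Fin 2),
              PresentedGroup.of (rels := rels) (1 : Fin 2)} :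
                Set (PresentedGroup rels))
            (⁅PresentedGroup.of (rels := rels) (0 : Fin 2),
              PresentedGroup.of (rels := rels) (1 : Fin 2)⁆ ^ n) : ℝ) ∧
        (wordLength
            ({PresentedGroup.of (rels := rels) (0 : Fin 2),
              PresentedGroup.of (rels := rels) (1 : Fin 2)} :
                Set (PresentedGroup rels))
            (⁅PresentedGroup.of (rels := rels) (0 : Fin 2),
              PresentedGroup.of (rels := rels) (1 : Fin 2)⁆ ^ n) : ℝ) ≤
          C * Real.sqrt n := by

  classical
  -- abbreviations
  set A : PresentedGroup rels := PresentedGroup.of (rels := rels) (0 : Fin 2) with hA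
  set B : PresentedGroup rels := PresentedGroup.of (rels := rels) (1 : Fin 2) with hB
  set q : PresentedGroup rels := ⁅A, B⁆ with hq
  set S : Set (PresentedGroup rels) := {A, B} with hS
  -- relators are trivial in the quotient
  have hmk : ∀ r ∈ rels, PresentedGroup.mk rels r = 1 := fun r hr =>
    (QuotientGroup.eq_one_iff _).mpr (Subgroup.subset_normalClosure hr)
  have hr1 : ⁅FreeGroup.of (0 : Fin 2), ⁅FreeGroup.of (0 : Fin 2), FreeGroup.of (1 : Fin 2)⁆⁆
      ∈ rels := by rw [hrels]; exact Set.mem_insert _ _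
  have hr2 : ⁅FreeGroup.of (1 : Fin 2), ⁅FreeGroup.of (0 : Fin 2), FreeGroup.of (1 : Fin 2)⁆⁆
      ∈ rels := by rw [hrels]; exact Set.mem_insert_iff.mpr (Or.inr rfl)
  have hqa : Commute q A := by
    have h1 := hmk _ hr1
    rw [map_commutatorElement, map_commutatorElement] at h1
    exact (commutatorElement_eq_one_iff_commute.mp h1).symm
  have hqb : Commute q B := by
    have h1 := hmk _ hr2
    rw [map_commutatorElement, map_commutatorElement] at h1
    exact (commutatorElement_eq_one_iff_commute.mp h1).symm
  have hab : A * B = q * (B * A) := by rw [hq, commutatorElement_def]; group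
  -- the homomorphism to the concrete Heisenberg group
  have hrel : ∀ r ∈ rels, FreeGroup.lift (![⟨1,0,0⟩, ⟨0,1,0⟩] : Fin 2 → Heis) r = 1 := by
    rw [hrels]
    rintro r (rfl | rfl) <;>
      · rw [map_commutatorElement, map_commutatorElement]
        simp only [FreeGroup.lift_apply_of, Matrix.cons_val_zero, Matrix.cons_val_one, Matrix.head_cons]
        simp only [commutatorElement_def]
        ext <;> simp
  set φ : PresentedGroup rels →* Heis := PresentedGroup.toGroup hrel with hφ
  have hφA : φ A = ⟨1,0,0⟩ := by
    rw [hA]; exact PresentedGroup.toGroup.of hrel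
  have hφB : φ B = ⟨0,1,0⟩ := by
    rw [hB]; exact PresentedGroup.toGroup.of hrel
  have hφq : φ q = ⟨0,0,1⟩ := by
    rw [hq, map_commutatorElement, hφA, hφB, Heis.comm_ab]
  have hφqn : ∀ n : ℕ, φ (q ^ n) = ⟨0,0,(n : ℤ)⟩ := by
    intro n
    rw [map_pow, hφq, Heis.zpow]
    simp
  -- membership of generators
  have hAS : A ∈ S ∪ S⁻¹ := Or.inl (Set.mem_insert _ _)
  have hBS : B ∈ S ∪ S⁻¹ := Or.inl (Set.mem_insert_iff.mpr (Or.inr rfl))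
  have hAiS : A⁻¹ ∈ S ∪ S⁻¹ := Or.inr (by rw [Set.mem_inv, inv_inv]; exact Set.mem_insert _ _)
  have hBiS : B⁻¹ ∈ S ∪ S⁻¹ := Or.inr (by
    rw [Set.mem_inv]; simp only [inv_inv]; exact Set.mem_insert_iff.mpr (Or.inr rfl))
  -- the explicit word of length 4k + 4r representing q^(k*k+r)
  have hword : ∀ k r : ℕ, ∃ l : List (PresentedGroup rels),
      l.length = 4 * k + 4 * r ∧ (∀ x ∈ l, x ∈ S ∪ S⁻¹) ∧ l.prod = q ^ (k * k + r) := by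
    intro k r
    refine ⟨List.replicate k A ++ List.replicate k B ++ List.replicate k A⁻¹ ++
      List.replicate k B⁻¹ ++ (List.replicate r [A, B, A⁻¹, B⁻¹]).flatten, ?_, ?_, ?_⟩
    · simp [List.length_flatten]
      ring
    · intro x hx
      simp only [List.mem_append, List.mem_replicate, List.mem_flatten, List.mem_replicate] at hx
      rcases hx with ((((⟨-, rfl⟩ | ⟨-, rfl⟩) | ⟨-, rfl⟩) | ⟨-, rfl⟩) | ⟨w, ⟨-, rfl⟩, hw⟩)
      · exact hAS
      · exact hBS
      · exact hAiS
      · exact hBiS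
      · simp only [List.mem_cons, List.not_mem_nil, or_false] at hw
        rcases hw with rfl | rfl | rfl | rfl
        · exact hAS
        · exact hBS
        · exact hAiS
        · exact hBiS
    · have hw4 : ([A, B, A⁻¹, B⁻¹] : List (PresentedGroup rels)).prod = q := by
        have : q = A * B * A⁻¹ * B⁻¹ := by rw [hq, commutatorElement_def]
        rw [this]
        simp [mul_assoc]
      have hjoin : ((List.replicate r [A, B, A⁻¹, B⁻¹]).flatten).prod = q ^ r := by
        rw [List.prod_flatten, List.map_replicate, List.prod_replicate, hw4]
      rw [List.prod_append, List.prod_append, List.prod_append, List.prod_append, hjoin]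
      simp only [List.prod_replicate]
      have hcomm : ⁅A ^ k, B ^ k⁆ = q ^ (k * k) := commutator_pow_eq hab hqa hqb k
      rw [pow_add, ← hcomm, commutatorElement_def, inv_pow, inv_pow]
  -- upper bound on word length
  have hupper : ∀ n : ℕ, wordLength S (q ^ n) ≤ 12 * Nat.sqrt n := by
    intro n
    set k := Nat.sqrt n with hk
    have h1 : k * k ≤ n := by have := Nat.sqrt_le' n; rwa [pow_two] at this
    have h2 : n < k * k + 2 * k + 1 := by
      have h2' := Nat.lt_succ_sqrt' n
      rw [pow_two] at h2'
      calc n < (k + 1) * (k + 1) := h2'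
        _ = k * k + 2 * k + 1 := by ring
    set r := n - k * k with hr'
    have hn : n = k * k + r := by omega
    obtain ⟨l, hlen, hmem, hprod⟩ := hword k r
    have : wordLength S (q ^ n) ≤ 4 * k + 4 * r := by
      apply Nat.sInf_le
      exact ⟨l, by rw [hlen], hmem, by rw [hprod, ← hn]⟩
    omega
  -- lower bound on word length
  have hlow : ∀ n : ℕ, (n : ℤ) ≤ (wordLength S (q ^ n) : ℤ) ^ 2 := by
    intro n
    have hne : {m : ℕ | ∃ l : List (PresentedGroup rels),
        l.length = m ∧ (∀ x ∈ l, x ∈ S ∪ S⁻¹) ∧ l.prod = q ^ n}.Nonempty := by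
      obtain ⟨l, hlen, hmem, hprod⟩ := hword (Nat.sqrt n) (n - Nat.sqrt n * Nat.sqrt n)
      have h1 : Nat.sqrt n * Nat.sqrt n ≤ n := by
        have := Nat.sqrt_le' n; rwa [pow_two] at this
      exact ⟨l.length, l, rfl, hmem, by
        rw [hprod]; congr 1; omega⟩
    have hmem := Nat.sInf_mem hne
    obtain ⟨l, hlen, hmeml, hprod⟩ := hmem
    have hmap : ∀ p ∈ l.map φ,
        p = (⟨1,0,0⟩ : Heis) ∨ p = ⟨-1,0,0⟩ ∨ p = ⟨0,1,0⟩ ∨ p = ⟨0,-1,0⟩ := by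
      intro p hp
      obtain ⟨x, hx, rfl⟩ := List.mem_map.mp hp
      rcases hmeml x hx with hx' | hx'
      · rcases hx' with rfl | hx'
        · left; exact hφA
        · right; right; left; rw [Set.mem_singleton_iff.mp hx']; exact hφB
      · rw [Set.mem_inv] at hx'
        rcases hx' with h | h
        · have : x = A⁻¹ := by rw [← h]; simp
          subst this
          right; left; rw [map_inv, hφA]; ext <;> simp
        · have : x = B⁻¹ := by rw [← Set.mem_singleton_iff.mp h]; simp
          subst this
          right; right; right; rw [map_inv, hφB]; ext <;> simp
    have hbound := (Heis.prod_bound (l.map φ) hmap).2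
    rw [← map_list_prod, hprod, hφqn n] at hbound
    simp only [List.length_map] at hbound
    rw [hlen] at hbound
    calc (n : ℤ) ≤ |(n : ℤ)| := le_abs_self _
      _ ≤ _ := hbound
  -- conclusion
  refine ⟨12, by norm_num, fun n hn => ?_⟩
  have hsq : Real.sqrt n ≤ (wordLength S (q ^ n) : ℝ) := by
    have h0 : ((wordLength S (q ^ n) : ℝ)) = Real.sqrt ((wordLength S (q ^ n) : ℝ) ^ 2) :=
      (Real.sqrt_sq (Nat.cast_nonneg _)).symm
    rw [h0]
    apply Real.sqrt_le_sqrt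
    have := hlow n
    exact_mod_cast this
  constructor
  · have h0 := Real.sqrt_nonneg (n : ℝ)
    have h1 : (1 / 12 : ℝ) * Real.sqrt n ≤ Real.sqrt n := by linarith
    linarith
  · have hk : ((Nat.sqrt n : ℕ) : ℝ) ≤ Real.sqrt n := by
      rw [Real.le_sqrt (Nat.cast_nonneg _) (Nat.cast_nonneg _)]
      have : Nat.sqrt n ^ 2 ≤ n := Nat.sqrt_le' n
      exact_mod_cast this
    have h12 : (wordLength S (q ^ n) : ℝ) ≤ 12 * (Nat.sqrt n : ℝ) := by
      exact_mod_cast Nat.cast_le.mpr (hupper n)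
    calc (wordLength S (q ^ n) : ℝ) ≤ 12 * (Nat.sqrt n : ℝ) := h12
      _ ≤ 12 * Real.sqrt n := by linarith
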